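/- Let N ≥ 2 and let (a,b,c,d) ∈ ℂ⁴ be a nonzero quadruple. Then a^(2N) + c^(2N) = b^(2N) + d^(2N) holds if and only if there exists a nonzero triple (k', k, l) ∈ ℂ³ with k'² + k² = l² such that k·a^N + k'·c^N = l·d^N, k·b^N + k'·d^N = l·c^N, l·a^N + k'·b^N = k·d^N, and k'·a^N + l·b^N = k·c^N. (This expresses that the degree-2N Fermat hypersurface in ℙ³ is the union of the rapidity curves of the N-state chiral Potts model over all parameters, including the degenerate ones.) -/
import Mathlib


/-- A nonzero quadruple `(a,b,c,d) ∈ ℂ⁴` lies on the degree-`2N` Fermat hypersurface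
`a^(2N) + c^(2N) = b^(2N) + d^(2N)` if and only if there is a nonzero triple
`(k',k,l) ∈ ℂ³` with `k'² + k² = l²` such that the four (projective) chiral Potts
rapidity equations `k·a^N + k'·c^N = l·d^N`, `k·b^N + k'·d^N = l·c^N`,
`l·a^N + k'·b^N = k·d^N`, `k'·a^N + l·b^N = k·c^N` hold. -/
theorem fermat_eq_union_of_rapidity_curves (N : ℕ) (hN : 2 ≤ N) (a b c d : ℂ)
    (habcd : ¬(a = 0 ∧ b = 0 ∧ c = 0 ∧ d = 0)) :
    a ^ (2 * N) + c ^ (2 * N) = b ^ (2 * N) + d ^ (2 * N) ↔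
      ∃ k' k l : ℂ, ¬(k' = 0 ∧ k = 0 ∧ l = 0) ∧
        k' ^ 2 + k ^ 2 = l ^ 2 ∧
        k * a ^ N + k' * c ^ N = l * d ^ N ∧
        k * b ^ N + k' * d ^ N = l * c ^ N ∧
        l * a ^ N + k' * b ^ N = k * d ^ N ∧
        k' * a ^ N + l * b ^ N = k * c ^ N := by
  have hN0 : N ≠ 0 := by omega
  set A := a ^ N with hA
  set B := b ^ N with hB
  set C := c ^ N with hC
  set D := d ^ N with hD
  have ha2 : a ^ (2 * N) = A ^ 2 := by rw [hA, ← pow_mul, Nat.mul_comm]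
  have hb2 : b ^ (2 * N) = B ^ 2 := by rw [hB, ← pow_mul, Nat.mul_comm]
  have hc2 : c ^ (2 * N) = C ^ 2 := by rw [hC, ← pow_mul, Nat.mul_comm]
  have hd2 : d ^ (2 * N) = D ^ 2 := by rw [hD, ← pow_mul, Nat.mul_comm]
  rw [ha2, hb2, hc2, hd2]
  constructor
  · intro hF
    by_cases hT : B * D - A * C = 0 ∧ C ^ 2 - D ^ 2 = 0 ∧ B * C - A * D = 0
    · -- degenerate case: use the second triple
      refine ⟨A ^ 2 - D ^ 2, -(A * C + B * D), -(A * B + C * D), ?_, ?_, ?_, ?_, ?_, ?_⟩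
      · rintro ⟨e1, e2, e3⟩
        obtain ⟨t1, t2, t3⟩ := hT
        have hAC : A * C = 0 := by linear_combination (-1/2 : ℂ) * e2 - (1/2 : ℂ) * t1
        have hD4 : D ^ 4 = 0 := by
          have hA2 : A ^ 2 = D ^ 2 := by linear_combination e1
          have hC2 : C ^ 2 = D ^ 2 := by linear_combination t2
          calc D ^ 4 = (A * C) ^ 2 := by linear_combination (-C^2) * hA2 - D^2 * hC2
          _ = 0 := by rw [hAC]; ring
        have hDz : D = 0 := by
          have := pow_eq_zero_iff (n := 4) (by norm_num) |>.mp hD4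
          exact this
        have hAz : A = 0 := by
          have : A ^ 2 = 0 := by rw [hDz] at e1; linear_combination e1
          exact pow_eq_zero_iff (n := 2) (by norm_num) |>.mp this
        have hCz : C = 0 := by
          have : C ^ 2 = 0 := by rw [hDz] at t2; linear_combination t2
          exact pow_eq_zero_iff (n := 2) (by norm_num) |>.mp this
        have hBz : B = 0 := by
          have : B ^ 2 = 0 := by
            rw [hAz, hCz, hDz] at hF; linear_combination -hF
          exact pow_eq_zero_iff (n := 2) (by norm_num) |>.mp this
        exact habcd ⟨pow_eq_zero_iff hN0 |>.mp hAz,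
          pow_eq_zero_iff hN0 |>.mp hBz,
          pow_eq_zero_iff hN0 |>.mp hCz,
          pow_eq_zero_iff hN0 |>.mp hDz⟩
      · linear_combination (A ^ 2 - D ^ 2) * hF
      · ring
      · linear_combination D * hF
      · ring
      · linear_combination A * hF
    · -- generic case: use the first triple
      refine ⟨B * D - A * C, C ^ 2 - D ^ 2, B * C - A * D, hT, ?_, ?_, ?_, ?_, ?_⟩
      · linear_combination (C ^ 2 - D ^ 2) * hF
      · ring
      · ring
      · linear_combination (-D) * hF
      · linear_combination (-C) * hF
  · rintro ⟨k', k, l, hnz, hkl, h1, h2, h3, h4⟩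
    by_cases hk : k = 0
    · subst hk
      by_cases hk' : k' = 0
      · subst hk'
        exfalso
        have hl : l = 0 := by
          have : l ^ 2 = 0 := by linear_combination -hkl
          exact pow_eq_zero_iff (n := 2) (by norm_num) |>.mp this
        exact hnz ⟨rfl, rfl, hl⟩
      · have key : k' ^ 2 * (A ^ 2 + C ^ 2) = k' ^ 2 * (B ^ 2 + D ^ 2) := by
          linear_combination (l * A - k' * B) * h3 + (A ^ 2 - D ^ 2) * hkl +
            (k' * C + l * D) * h1
        exact mul_left_cancel₀ (pow_ne_zero 2 hk') key
    · have key : k * (A ^ 2 + C ^ 2) = k * (B ^ 2 + D ^ 2) := by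
        linear_combination A * h1 - C * h4 + D * h3 - B * h2
      exact mul_left_cancel₀ hk key
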